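/- arXiv:2410.20637 — 2 statements merged into one kernel-verified Lean document; each statement's English description precedes it below -/
import Mathlib

section
/- A pair (A, C) of real matrices (A of size n×n, C of size m×n) is unobservable (i.e., the observability matrix formed by stacking C, CA, ..., CA^{n-1} has rank less than n) if and only if there exists a nonzero eigenvector v of A with Cv = 0, where eigenvectors may be complex. -/
open Matrix

/-- The observability matrix of the pair `(A, C)`: the stack of `C, C*A, ..., C*A^(n-1)`. -/
noncomputable def obsMatrix {n : ℕ} {m : Type*} (A : Matrix (Fin n) (Fin n) ℝ)
    (C : Matrix m (Fin n) ℝ) : Matrix (Fin n × m) (Fin n) ℝ :=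
  fun p j => (C * A ^ (p.1 : ℕ)) p.2 j

/-- The pair `(A, C)` is observable iff its observability matrix has full column rank `n`. -/
def Observable {n : ℕ} {m : Type*} (A : Matrix (Fin n) (Fin n) ℝ)
    (C : Matrix m (Fin n) ℝ) : Prop :=
  (obsMatrix A C).rank = n

/-- Unobservability is equivalent to a nontrivial real kernel of the observability matrix. -/
lemma unobservable_iff_ker {n m : ℕ} (A : Matrix (Fin n) (Fin n) ℝ)
    (C : Matrix (Fin m) (Fin n) ℝ) :
    ¬ Observable A C ↔ ∃ v : Fin n → ℝ, v ≠ 0 ∧ (obsMatrix A C) *ᵥ v = 0 := by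
  set M := obsMatrix A C
  have hle : M.rank ≤ n := M.rank_le_card_width.trans_eq (Fintype.card_fin n)
  have hrn : M.rank + Module.finrank ℝ (LinearMap.ker M.mulVecLin) = n := by
    have := LinearMap.finrank_range_add_finrank_ker M.mulVecLin
    simpa [Matrix.rank] using this
  constructor
  · intro h
    have hlt : M.rank < n := lt_of_le_of_ne hle h
    have hk : Module.finrank ℝ (LinearMap.ker M.mulVecLin) ≠ 0 := by omega
    have : LinearMap.ker M.mulVecLin ≠ ⊥ := by
      intro hbot
      rw [hbot] at hk
      simp at hk
    obtain ⟨v, hv, hv0⟩ := Submodule.exists_mem_ne_zero_of_ne_bot this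
    exact ⟨v, hv0, hv⟩
  · rintro ⟨v, hv0, hv⟩ h
    have hk : LinearMap.ker M.mulVecLin = ⊥ := by
      have h' : M.rank = n := h
      have : Module.finrank ℝ (LinearMap.ker M.mulVecLin) = 0 := by omega
      exact Submodule.finrank_eq_zero.mp this
    have : v ∈ LinearMap.ker M.mulVecLin := by
      simpa [Matrix.mulVecLin] using hv
    rw [hk] at this
    exact hv0 (by simpa using this)

/-- A real matrix has a nontrivial real kernel iff its complexification has a nontrivial
complex kernel. -/
lemma ker_real_iff_complex {p : Type*} {q : ℕ} (M : Matrix p (Fin q) ℝ) :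
    (∃ v : Fin q → ℝ, v ≠ 0 ∧ M *ᵥ v = 0) ↔
      (∃ w : Fin q → ℂ, w ≠ 0 ∧ (M.map Complex.ofReal) *ᵥ w = 0) := by
  constructor
  · rintro ⟨v, hv0, hv⟩
    refine ⟨fun i => (v i : ℂ), ?_, ?_⟩
    · intro h
      apply hv0
      funext i
      have h2 := congrFun h i
      simp only [Pi.zero_apply] at h2 ⊢
      exact_mod_cast h2
    · funext i
      have := (Complex.ofRealHom).map_mulVec M v i
      have h2 : ((M *ᵥ v) i : ℂ) = (M.map Complex.ofReal *ᵥ fun j => (v j : ℂ)) i := by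
        exact this
      rw [hv] at h2
      simpa using h2.symm
  · rintro ⟨w, hw0, hw⟩
    have hre : M *ᵥ (fun i => (w i).re) = 0 := by
      funext i
      have := congrFun hw i
      have : ((M.map Complex.ofReal *ᵥ w) i).re = 0 := by rw [this]; simp
      simpa [Matrix.mulVec, dotProduct, Complex.re_sum] using this
    have him : M *ᵥ (fun i => (w i).im) = 0 := by
      funext i
      have := congrFun hw i
      have : ((M.map Complex.ofReal *ᵥ w) i).im = 0 := by rw [this]; simp
      simpa [Matrix.mulVec, dotProduct, Complex.im_sum] using this
    by_cases hr : (fun i => (w i).re) = 0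
    · refine ⟨fun i => (w i).im, ?_, him⟩
      intro h
      apply hw0
      funext i
      have h1 := congrFun hr i
      have h2 := congrFun h i
      simp only [Pi.zero_apply] at h1 h2
      exact Complex.ext h1 h2
    · exact ⟨fun i => (w i).re, hr, hre⟩

lemma my_sum_mulVec {a b : ℕ} {ι : Type*} (s : Finset ι) (f : ι → Matrix (Fin a) (Fin b) ℂ)
    (x : Fin b → ℂ) : (∑ i ∈ s, f i) *ᵥ x = ∑ i ∈ s, (f i) *ᵥ x := by
  classical
  induction s using Finset.induction with
  | empty => simp [Matrix.zero_mulVec]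
  | insert _ _ h ih => rw [Finset.sum_insert h, Finset.sum_insert h, Matrix.add_mulVec, ih]

/-- The pair (A, C) is unobservable iff some (possibly complex) nonzero eigenvector v of A
satisfies Cv = 0. -/
theorem unobservable_iff_eigenvector {n m : ℕ} (A : Matrix (Fin n) (Fin n) ℝ)
    (C : Matrix (Fin m) (Fin n) ℝ) :
    ¬ Observable A C ↔
      ∃ v : Fin n → ℂ, v ≠ 0 ∧ (∃ μ : ℂ, (A.map (Complex.ofReal)) *ᵥ v = μ • v) ∧
        (C.map (Complex.ofReal)) *ᵥ v = 0 := by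
  rcases Nat.eq_zero_or_pos n with hn | hn
  · subst hn
    constructor
    · intro h
      exact absurd (show Observable A C from Nat.le_zero.mp
        ((obsMatrix A C).rank_le_card_width.trans_eq (Fintype.card_fin 0))) h
    · rintro ⟨v, hv0, _, _⟩
      exact absurd (funext fun i => absurd i.2 (by omega)) hv0
  set Aℂ := A.map (Complex.ofReal) with hAc
  set Cℂ := C.map (Complex.ofReal) with hCc
  have hmap : ∀ k : ℕ, (C * A ^ k).map Complex.ofReal = Cℂ * Aℂ ^ k := by
    intro k
    rw [hAc, hCc]
    have h1 : (C * A ^ k).map (Complex.ofRealHom : ℝ →+* ℂ) =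
        C.map Complex.ofRealHom * (A ^ k).map Complex.ofRealHom := Matrix.map_mul
    have h2 : (A ^ k).map (Complex.ofRealHom : ℝ →+* ℂ) = (A.map Complex.ofRealHom) ^ k := by
      simpa [RingHom.mapMatrix_apply] using map_pow (Complex.ofRealHom.mapMatrix) A k
    exact h1.trans (by rw [h2]; rfl)
  -- complexified observability matrix applied to w, componentwise
  have hObs : ∀ (w : Fin n → ℂ),
      ((obsMatrix A C).map Complex.ofReal) *ᵥ w = 0 ↔
        ∀ k : Fin n, (Cℂ * Aℂ ^ (k : ℕ)) *ᵥ w = 0 := by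
    intro w
    constructor
    · intro h k
      funext i
      have := congrFun h (k, i)
      simpa [obsMatrix, Matrix.mulVec, dotProduct, Matrix.map_apply,
        ← congrFun (congrFun (hmap (k : ℕ)) i)] using this
    · intro h
      funext p
      have := congrFun (h p.1) p.2
      simpa [obsMatrix, Matrix.mulVec, dotProduct, Matrix.map_apply,
        ← congrFun (congrFun (hmap (p.1 : ℕ)) p.2)] using this
  rw [unobservable_iff_ker, ker_real_iff_complex]
  constructor
  · rintro ⟨w, hw0, hw⟩
    rw [hObs] at hw
    -- the unobservable subspace
    set V : Submodule ℂ (Fin n → ℂ) :=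
      ⨅ k : Fin n, LinearMap.ker (Cℂ * Aℂ ^ (k : ℕ)).mulVecLin with hV
    have memV : ∀ x, x ∈ V ↔ ∀ k : Fin n, (Cℂ * Aℂ ^ (k : ℕ)) *ᵥ x = 0 := by
      intro x
      simp [hV, Submodule.mem_iInf, LinearMap.mem_ker]
    have hwV : w ∈ V := (memV w).mpr hw
    -- Cayley–Hamilton: C * A^n kills V
    have hCH : ∀ x ∈ V, (Cℂ * Aℂ ^ n) *ᵥ x = 0 := by
      intro x hx
      have hdeg : Aℂ.charpoly.natDegree = n := by
        simp [Matrix.charpoly_natDegree_eq_dim]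
      have h0 := Matrix.aeval_self_charpoly Aℂ
      rw [Polynomial.aeval_eq_sum_range, hdeg] at h0
      rw [Finset.sum_range_succ] at h0
      have hlead : Aℂ.charpoly.coeff n = 1 := by
        have := Aℂ.charpoly_monic
        rw [Polynomial.Monic, Polynomial.leadingCoeff, hdeg] at this
        exact this
      rw [hlead, one_smul] at h0
      have hAn : Aℂ ^ n = -(∑ i ∈ Finset.range n, Aℂ.charpoly.coeff i • Aℂ ^ i) := by
        linear_combination (norm := module) h0
      rw [hAn]
      have : Cℂ * -(∑ i ∈ Finset.range n, Aℂ.charpoly.coeff i • Aℂ ^ i) =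
          -(∑ i ∈ Finset.range n, Aℂ.charpoly.coeff i • (Cℂ * Aℂ ^ i)) := by
        rw [Matrix.mul_neg, Matrix.mul_sum]
        congr 1
        refine Finset.sum_congr rfl fun i _ => ?_
        rw [Matrix.mul_smul]
      rw [this, Matrix.neg_mulVec, my_sum_mulVec]
      have hz : ∀ i ∈ Finset.range n, (Aℂ.charpoly.coeff i • (Cℂ * Aℂ ^ i)) *ᵥ x = 0 := by
        intro i hi
        rw [Finset.mem_range] at hi
        have := (memV x).mp hx ⟨i, hi⟩
        rw [Matrix.smul_mulVec, this, smul_zero]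
      rw [Finset.sum_congr rfl hz]
      simp
    -- V is A-invariant
    have hinv : ∀ x ∈ V, Aℂ *ᵥ x ∈ V := by
      intro x hx
      rw [memV]
      intro k
      have : (Cℂ * Aℂ ^ (k : ℕ)) *ᵥ (Aℂ *ᵥ x) = (Cℂ * Aℂ ^ ((k : ℕ) + 1)) *ᵥ x := by
        rw [Matrix.mulVec_mulVec, pow_succ, ← Matrix.mul_assoc]
      rw [this]
      rcases Nat.lt_or_ge ((k : ℕ) + 1) n with hk | hk
      · exact (memV x).mp hx ⟨(k : ℕ) + 1, hk⟩
      · have hk' : (k : ℕ) + 1 = n := by omega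
        rw [hk']
        exact hCH x hx
    -- restrict A to V and find an eigenvector
    let f : V →ₗ[ℂ] V := Aℂ.mulVecLin.restrict hinv
    haveI : Nontrivial V := Submodule.nontrivial_iff_ne_bot.mpr (by
      intro hbot
      rw [hbot] at hwV
      exact hw0 (by simpa using hwV))
    obtain ⟨μ, hμ⟩ := Module.End.exists_eigenvalue f
    obtain ⟨⟨v, hvV⟩, hev⟩ := hμ.exists_hasEigenvector
    have hv0 : v ≠ 0 := by
      intro h
      exact hev.2 (by simp [h])
    have heq : Aℂ *ᵥ v = μ • v := by
      have := Module.End.mem_eigenspace_iff.mp hev.1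
      have := congrArg Subtype.val this
      exact this
    have hCv : Cℂ *ᵥ v = 0 := by
      have := (memV v).mp hvV ⟨0, hn⟩
      simpa using this
    exact ⟨v, hv0, ⟨μ, heq⟩, hCv⟩
  · rintro ⟨v, hv0, ⟨μ, hμ⟩, hCv⟩
    refine ⟨v, hv0, ?_⟩
    rw [hObs]
    intro k
    have hpow : ∀ j : ℕ, Aℂ ^ j *ᵥ v = μ ^ j • v := by
      intro j
      induction j with
      | zero => simp
      | succ j ih =>
        rw [pow_succ, ← Matrix.mulVec_mulVec, hμ, Matrix.mulVec_smul, ih, smul_smul]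
        congr 1
        ring
    rw [← Matrix.mulVec_mulVec, hpow, Matrix.mulVec_smul, hCv, smul_zero]
end

section
/- If the Laplacian L of a connected graph with distinct eigenvalues admits a non-identity permutation matrix Ψ with Ψ_{nn} = 1 and ΨL = LΨ, then the single-measurement pair (-L, e_n) is unobservable: some eigenvector of L has zero n-th component. -/
open Matrix

/-- The row vector selecting the last coordinate. -/
noncomputable def anchorRow (n : ℕ) : Matrix (Fin 1) (Fin (n + 1)) ℝ :=
  fun _ j => if j = Fin.last n then 1 else 0

/-- If the Laplacian L of a connected graph with distinct eigenvalues (all eigenspaces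
one-dimensional) commutes with a non-identity permutation matrix Ψ fixing the last
coordinate (Ψ_{nn} = 1), then some nonzero eigenvector of L has zero n-th component, and
the single-measurement pair (-L, e_n) is unobservable. -/
theorem symmetric_anchor_unobservable {n : ℕ} (G : SimpleGraph (Fin (n + 1)))
    [DecidableRel G.Adj] (hconn : G.Connected)
    (hdistinct : ∀ (μ : ℝ) (v w : Fin (n + 1) → ℝ), v ≠ 0 →
      G.lapMatrix ℝ *ᵥ v = μ • v → G.lapMatrix ℝ *ᵥ w = μ • w → ∃ c : ℝ, w = c • v)
    (Ψ : Matrix (Fin (n + 1)) (Fin (n + 1)) ℝ)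
    (hperm : ∃ σ : Equiv.Perm (Fin (n + 1)), ∀ i j, Ψ i j = if σ j = i then 1 else 0)
    (hΨne : Ψ ≠ 1) (hfix : Ψ (Fin.last n) (Fin.last n) = 1)
    (hcomm : Ψ * G.lapMatrix ℝ = G.lapMatrix ℝ * Ψ) :
    (∃ v : Fin (n + 1) → ℝ, v ≠ 0 ∧ (∃ μ : ℝ, G.lapMatrix ℝ *ᵥ v = μ • v) ∧
      v (Fin.last n) = 0) ∧
    ¬ Observable (-(G.lapMatrix ℝ)) (anchorRow n) := by
  obtain ⟨σ, hσ⟩ := hperm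
  set L := G.lapMatrix ℝ with hLdef
  have hL : L.IsHermitian := by
    rw [Matrix.IsHermitian, conjTranspose_eq_transpose_of_trivial,
      SimpleGraph.isSymm_lapMatrix]
  -- (Ψ *ᵥ x) i = x (σ⁻¹ i)
  have hΨmul : ∀ (x : Fin (n+1) → ℝ) (i : Fin (n+1)), (Ψ *ᵥ x) i = x (σ.symm i) := by
    intro x i
    simp only [mulVec, dotProduct, hσ]
    rw [Finset.sum_eq_single (σ.symm i)]
    · simp
    · intro j _ hj
      rw [if_neg, zero_mul]
      intro h; exact hj (by simp [← h])
    · simp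
  have hσlast : σ.symm (Fin.last n) = Fin.last n := by
    have h1 := hσ (Fin.last n) (Fin.last n)
    rw [hfix] at h1
    have h2 : σ (Fin.last n) = Fin.last n := by
      by_contra h2
      rw [if_neg h2] at h1; norm_num at h1
    rw [Equiv.symm_apply_eq]; exact h2.symm
  -- find eigenvector moved by Ψ
  have hexists : ∃ i, Ψ *ᵥ ⇑(hL.eigenvectorBasis i) ≠ ⇑(hL.eigenvectorBasis i) := by
    by_contra h
    push_neg at h
    apply hΨne
    have hall : ∀ x : EuclideanSpace ℝ (Fin (n+1)), Ψ *ᵥ (x : Fin (n+1) → ℝ) = x := by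
      intro x
      have hmem : x ∈ Submodule.span ℝ (Set.range hL.eigenvectorBasis.toBasis) := by
        rw [hL.eigenvectorBasis.toBasis.span_eq]; trivial
      induction hmem using Submodule.span_induction with
      | mem y hy =>
        obtain ⟨i, rfl⟩ := hy
        simpa using h i
      | zero =>
        show Ψ *ᵥ (0 : Fin (n+1) → ℝ) = 0
        rw [Matrix.mulVec_zero]
      | add y z _ _ hy hz =>
        show Ψ *ᵥ (y + z) = y + z
        rw [Matrix.mulVec_add]
        exact congrArg₂ (· + ·) hy hz
      | smul c y _ hy =>
        show Ψ *ᵥ (c • y) = c • y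
        rw [Matrix.mulVec_smul]
        exact congrArg (c • ·) hy
    ext i j
    have hx := congrFun (hall (WithLp.toLp 2 (Pi.single j 1 : Fin (n+1) → ℝ) : EuclideanSpace ℝ (Fin (n+1)))) i
    simp only [WithLp.ofLp_toLp, Matrix.mulVec_single, mul_one, MulOpposite.op_one, one_smul, Matrix.col_apply] at hx
    rw [hx, Matrix.one_apply, Pi.single_apply]
  obtain ⟨i, hi⟩ := hexists
  set v : Fin (n+1) → ℝ := ⇑(hL.eigenvectorBasis i) with hv
  set μ := hL.eigenvalues i with hμ
  have hev : L *ᵥ v = μ • v := hL.mulVec_eigenvectorBasis i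
  set w : Fin (n+1) → ℝ := Ψ *ᵥ v - v with hw
  have hwne : w ≠ 0 := sub_ne_zero_of_ne hi
  have hwev : L *ᵥ w = μ • w := by
    rw [hw, Matrix.mulVec_sub, hev, Matrix.mulVec_mulVec, ← hcomm, ← Matrix.mulVec_mulVec,
      hev, Matrix.mulVec_smul, smul_sub]
  have hwlast : w (Fin.last n) = 0 := by
    rw [hw]
    simp only [Pi.sub_apply, hΨmul, hσlast, sub_self]
  refine ⟨⟨w, hwne, ⟨μ, hwev⟩, hwlast⟩, ?_⟩
  -- Unobservability
  intro hobs
  have hker : (obsMatrix (-L) (anchorRow n)).mulVecLin w = 0 := by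
    ext ⟨k, m⟩
    have hpow : ∀ k : ℕ, (-L) ^ k *ᵥ w = (-μ) ^ k • w := by
      intro k
      induction k with
      | zero => simp
      | succ k ih =>
        rw [pow_succ, ← Matrix.mulVec_mulVec, Matrix.neg_mulVec, hwev, ← neg_smul,
          Matrix.mulVec_smul, ih, smul_smul, pow_succ, mul_comm]
    show ((fun p j => (anchorRow n * (-L) ^ (p.1 : ℕ)) p.2 j : Matrix _ _ ℝ) *ᵥ w) (k, m) = 0
    have : ((anchorRow n * (-L) ^ (k : ℕ)) *ᵥ w) m = 0 := by
      rw [← Matrix.mulVec_mulVec, hpow, Matrix.mulVec_smul]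
      have : (anchorRow n *ᵥ w) m = 0 := by
        simp [anchorRow, mulVec, dotProduct, ite_mul, hwlast]
      simp [this]
    simpa [Matrix.mulVec, dotProduct] using this
  have hfin : Module.finrank ℝ (Fin (n+1) → ℝ) = n + 1 := by simp
  have hrn := LinearMap.finrank_range_add_finrank_ker (obsMatrix (-L) (anchorRow n)).mulVecLin
  rw [hfin] at hrn
  have hrank : (obsMatrix (-L) (anchorRow n)).rank =
      Module.finrank ℝ (LinearMap.range (obsMatrix (-L) (anchorRow n)).mulVecLin) := rfl
  rw [Observable] at hobs
  rw [hrank] at hobs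
  rw [hobs] at hrn
  have hker0 : Module.finrank ℝ (LinearMap.ker (obsMatrix (-L) (anchorRow n)).mulVecLin) = 0 := by
    omega
  have : LinearMap.ker (obsMatrix (-L) (anchorRow n)).mulVecLin = ⊥ :=
    Submodule.finrank_eq_zero.mp hker0
  have hw0 : w = 0 := by
    have : w ∈ LinearMap.ker (obsMatrix (-L) (anchorRow n)).mulVecLin := hker
    rw [‹LinearMap.ker _ = ⊥›] at this
    simpa using this
  exact hwne hw0
end
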